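/- arXiv:2311.04965 — 3 statements merged into one kernel-verified Lean document; each statement's English description precedes it below -/
import Mathlib

section
/- Let n ≥ 1 and let ν_n be the product of n independent copies of the normalized Haar probability measure on U(2). Then for all 2ⁿ×2ⁿ complex matrices A, B, ρ, and independent locally Haar-random encodings V = (V₁,…,V_n) and W = (W₁,…,W_n), ∫∫ tr((⊗V)* A (⊗V) ρ (⊗W)* B (⊗W) ρ) dν_n(V) dν_n(W) = tr(A) · tr(B) · tr(ρ²) / 2^{2n}. In particular, if tr(A_λ) = 0 for matrices A₁,…,A_Λ, then the mean of Σ_λ tr((⊗V)* A_λ (⊗V) ρ (⊗W)* A_λ (⊗W) ρ) over ν_n × ν_n is zero. -/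
open MeasureTheory Matrix TopologicalSpace ComplexConjugate

local notation "G" => Matrix.unitaryGroup (Fin 2) ℂ

def tensorProd {n : ℕ} (W : Fin n → Matrix.unitaryGroup (Fin 2) ℂ) :
    Matrix (Fin n → Fin 2) (Fin n → Fin 2) ℂ :=
  Matrix.of fun j k => ∏ i, (W i : Matrix (Fin 2) (Fin 2) ℂ) (j i) (k i)

instance : SecondCountableTopology (Matrix (Fin 2) (Fin 2) ℂ) :=
  inferInstanceAs (SecondCountableTopology (Fin 2 → Fin 2 → ℂ))
instance : SecondCountableTopology G :=
  secondCountableTopology_induced G (Matrix (Fin 2) (Fin 2) ℂ) Subtype.val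

lemma cont_entry (i j : Fin 2) : Continuous (fun U : G => (U : Matrix (Fin 2) (Fin 2) ℂ) i j) := by
  have h1 : Continuous (fun M : Matrix (Fin 2) (Fin 2) ℂ => M i j) :=
    (continuous_apply j).comp (continuous_apply (A := fun _ : Fin 2 => Fin 2 → ℂ) i)
  exact h1.comp continuous_subtype_val

section
variable [MeasurableSpace G] [BorelSpace G]
variable (μ : Measure G) [IsProbabilityMeasure μ]

-- integrability of products of entry pairs over pi measure
lemma integrable_prod_entries {n : ℕ} (a j b c : Fin n → Fin 2) :
    Integrable (fun V : Fin n → G =>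
      ∏ i, (conj ((V i : Matrix (Fin 2) (Fin 2) ℂ) (a i) (j i)) *
        (V i : Matrix (Fin 2) (Fin 2) ℂ) (b i) (c i))) (Measure.pi fun _ => μ) := by
  refine (integrable_const (1 : ℝ)).mono' ?_ ?_
  · refine Continuous.aestronglyMeasurable ?_
    refine continuous_finset_prod _ fun i _ => ?_
    exact ((Complex.continuous_conj.comp ((cont_entry (a i) (j i)).comp (continuous_apply i)))).mul
      ((cont_entry (b i) (c i)).comp (continuous_apply i))
  · refine Filter.Eventually.of_forall fun V => ?_
    calc ‖∏ i, (conj ((V i : Matrix (Fin 2) (Fin 2) ℂ) (a i) (j i)) *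
          (V i : Matrix (Fin 2) (Fin 2) ℂ) (b i) (c i))‖
        = ∏ i, ‖conj ((V i : Matrix (Fin 2) (Fin 2) ℂ) (a i) (j i)) *
          (V i : Matrix (Fin 2) (Fin 2) ℂ) (b i) (c i)‖ := norm_prod _ _
      _ ≤ ∏ i, (1 : ℝ) := by
          refine Finset.prod_le_prod (fun i _ => norm_nonneg _) fun i _ => ?_
          rw [norm_mul, RCLike.norm_conj]
          exact mul_le_one₀ (entry_norm_bound_of_unitary (V i).2 _ _) (norm_nonneg _)
            (entry_norm_bound_of_unitary (V i).2 _ _)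
      _ = 1 := Finset.prod_const_one

lemma entry_expand {n : ℕ} (A : Matrix (Fin n → Fin 2) (Fin n → Fin 2) ℂ)
    (j c : Fin n → Fin 2) (V : Fin n → G) :
    ((tensorProd V)ᴴ * A * tensorProd V) j c
      = ∑ a : Fin n → Fin 2, ∑ b : Fin n → Fin 2, A a b *
        ∏ i, (conj ((V i : Matrix (Fin 2) (Fin 2) ℂ) (a i) (j i)) *
          (V i : Matrix (Fin 2) (Fin 2) ℂ) (b i) (c i)) := by
  simp only [Matrix.mul_apply, Matrix.conjTranspose_apply, tensorProd, Matrix.of_apply,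
    Finset.sum_mul]
  rw [Finset.sum_comm]
  refine Finset.sum_congr rfl fun a _ => Finset.sum_congr rfl fun b _ => ?_
  rw [Finset.prod_mul_distrib, star_prod]
  simp only [starRingEnd_apply]
  ring

-- the moments over the pi measure
lemma pi_moment {n : ℕ} (a j b c : Fin n → Fin 2) :
    (∫ V : Fin n → G, ∏ i, (conj ((V i : Matrix (Fin 2) (Fin 2) ℂ) (a i) (j i)) *
        (V i : Matrix (Fin 2) (Fin 2) ℂ) (b i) (c i)) ∂(Measure.pi fun _ => μ))
      = ∏ i, ∫ U : G, conj ((U : Matrix (Fin 2) (Fin 2) ℂ) (a i) (j i)) *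
          (U : Matrix (Fin 2) (Fin 2) ℂ) (b i) (c i) ∂μ := by
  letI : MeasureSpace G := ⟨μ⟩
  have hvol : (Measure.pi fun _ : Fin n => μ) = (volume : Measure (Fin n → G)) := rfl
  rw [hvol]
  exact MeasureTheory.integral_fintype_prod_eq_prod (ι := Fin n)
    (f := fun i (U : G) => conj ((U : Matrix (Fin 2) (Fin 2) ℂ) (a i) (j i)) *
      (U : Matrix (Fin 2) (Fin 2) ℂ) (b i) (c i))

end

section
variable [MeasurableSpace G] [BorelSpace G]
variable (μ : Measure G) [μ.IsHaarMeasure] [IsProbabilityMeasure μ]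

lemma integrable_entry_pair (p q r s : Fin 2) :
    Integrable (fun U : G => conj ((U : Matrix (Fin 2) (Fin 2) ℂ) p q) *
      (U : Matrix (Fin 2) (Fin 2) ℂ) r s) μ := by
  refine (integrable_const (1 : ℝ)).mono' ?_ ?_
  · exact (((Complex.continuous_conj).comp (cont_entry p q)).mul (cont_entry r s)).aestronglyMeasurable
  · refine Filter.Eventually.of_forall fun U => ?_
    rw [norm_mul, RCLike.norm_conj]
    calc ‖(U : Matrix (Fin 2) (Fin 2) ℂ) p q‖ * ‖(U : Matrix (Fin 2) (Fin 2) ℂ) r s‖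
        ≤ 1 * 1 := by
          exact mul_le_mul (entry_norm_bound_of_unitary U.2 _ _)
            (entry_norm_bound_of_unitary U.2 _ _) (norm_nonneg _) zero_le_one
      _ = 1 := one_mul 1

def gD : G := ⟨!![(1:ℂ),0;0,-1], by
  rw [Matrix.mem_unitaryGroup_iff]
  ext i j
  fin_cases i <;> fin_cases j <;>
    simp [Matrix.mul_apply, Fin.sum_univ_two, Matrix.star_eq_conjTranspose,
      Matrix.conjTranspose_apply, Matrix.one_apply]⟩

def gS : G := ⟨!![(0:ℂ),1;1,0], by
  rw [Matrix.mem_unitaryGroup_iff]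
  ext i j
  fin_cases i <;> fin_cases j <;>
    simp [Matrix.mul_apply, Fin.sum_univ_two, Matrix.star_eq_conjTranspose,
      Matrix.conjTranspose_apply, Matrix.one_apply]⟩

lemma haar_moment' (p q r s : Fin 2) :
    ∫ U : G, conj ((U : Matrix (Fin 2) (Fin 2) ℂ) p q) * (U : Matrix (Fin 2) (Fin 2) ℂ) r s ∂μ
      = if p = r ∧ q = s then (2 : ℂ)⁻¹ else 0 := by
  set m : Fin 2 → Fin 2 → Fin 2 → Fin 2 → ℂ := fun p q r s =>
    ∫ U : G, conj ((U : Matrix (Fin 2) (Fin 2) ℂ) p q) * (U : Matrix (Fin 2) (Fin 2) ℂ) r s ∂μ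
    with hm
  -- effect of multiplying by gD on left
  have hD : ∀ p q r s : Fin 2, m p q r s =
      (if p = 0 then 1 else -1 : ℂ) * (if r = 0 then 1 else -1) * m p q r s := by
    intro p q r s
    have hinv := integral_mul_left_eq_self (μ := μ)
      (fun U : G => conj ((U : Matrix (Fin 2) (Fin 2) ℂ) p q) *
        (U : Matrix (Fin 2) (Fin 2) ℂ) r s) gD
    have hco : ∀ (U : G) (a b : Fin 2), ((gD * U : G) : Matrix (Fin 2) (Fin 2) ℂ) a b
        = (if a = 0 then 1 else -1 : ℂ) * (U : Matrix (Fin 2) (Fin 2) ℂ) a b := by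
      intro U a b
      show ((gD : Matrix (Fin 2) (Fin 2) ℂ) * (U : Matrix (Fin 2) (Fin 2) ℂ)) a b = _
      fin_cases a <;> simp [gD, Matrix.mul_apply, Fin.sum_univ_two]
    calc m p q r s = ∫ U : G, conj (((gD * U : G) : Matrix (Fin 2) (Fin 2) ℂ) p q) *
          ((gD * U : G) : Matrix (Fin 2) (Fin 2) ℂ) r s ∂μ := hinv.symm
      _ = ∫ U : G, (if p = 0 then 1 else -1 : ℂ) * (if r = 0 then 1 else -1) *
          (conj ((U : Matrix (Fin 2) (Fin 2) ℂ) p q) * (U : Matrix (Fin 2) (Fin 2) ℂ) r s) ∂μ := by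
          congr 1; ext U
          rw [hco U p q, hco U r s]
          have : conj (if p = 0 then 1 else -1 : ℂ) = (if p = 0 then 1 else -1 : ℂ) := by
            split <;> simp
          rw [_root_.map_mul, this]; ring
      _ = _ := by rw [integral_const_mul]
  -- effect of multiplying by gS on left: swaps row indices
  have hS : ∀ p q r s : Fin 2, m p q r s =
      m (if p = 0 then 1 else 0) q (if r = 0 then 1 else 0) s := by
    intro p q r s
    have hinv := integral_mul_left_eq_self (μ := μ)
      (fun U : G => conj ((U : Matrix (Fin 2) (Fin 2) ℂ) p q) *
        (U : Matrix (Fin 2) (Fin 2) ℂ) r s) gS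
    have hco : ∀ (U : G) (a b : Fin 2), ((gS * U : G) : Matrix (Fin 2) (Fin 2) ℂ) a b
        = (U : Matrix (Fin 2) (Fin 2) ℂ) (if a = 0 then 1 else 0) b := by
      intro U a b
      show ((gS : Matrix (Fin 2) (Fin 2) ℂ) * (U : Matrix (Fin 2) (Fin 2) ℂ)) a b = _
      fin_cases a <;> simp [gS, Matrix.mul_apply, Fin.sum_univ_two]
    calc m p q r s = ∫ U : G, conj (((gS * U : G) : Matrix (Fin 2) (Fin 2) ℂ) p q) *
          ((gS * U : G) : Matrix (Fin 2) (Fin 2) ℂ) r s ∂μ := hinv.symm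
      _ = _ := by
          congr 1; ext U; rw [hco U p q, hco U r s]
  -- column orthogonality: sum over rows
  have hsum : ∀ q s : Fin 2, m 0 q 0 s + m 1 q 1 s = if q = s then 1 else 0 := by
    intro q s
    have hint : ∫ U : G, (conj ((U : Matrix (Fin 2) (Fin 2) ℂ) 0 q) *
        (U : Matrix (Fin 2) (Fin 2) ℂ) 0 s
        + conj ((U : Matrix (Fin 2) (Fin 2) ℂ) 1 q) * (U : Matrix (Fin 2) (Fin 2) ℂ) 1 s) ∂μ
        = m 0 q 0 s + m 1 q 1 s :=
      integral_add (integrable_entry_pair μ 0 q 0 s) (integrable_entry_pair μ 1 q 1 s)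
    rw [← hint]
    have hpt : ∀ U : G, conj ((U : Matrix (Fin 2) (Fin 2) ℂ) 0 q) *
        (U : Matrix (Fin 2) (Fin 2) ℂ) 0 s
        + conj ((U : Matrix (Fin 2) (Fin 2) ℂ) 1 q) * (U : Matrix (Fin 2) (Fin 2) ℂ) 1 s
        = if q = s then 1 else 0 := by
      intro U
      have h1 : (star (U : Matrix (Fin 2) (Fin 2) ℂ) * (U : Matrix (Fin 2) (Fin 2) ℂ)) q s
          = (1 : Matrix (Fin 2) (Fin 2) ℂ) q s := by
        rw [U.2.1]
      simpa [Matrix.mul_apply, Fin.sum_univ_two, Matrix.star_eq_conjTranspose,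
        Matrix.conjTranspose_apply, Matrix.one_apply, mul_comm] using h1
    simp_rw [hpt]
    simp
  have two : ∀ i : Fin 2, i = 0 ∨ i = 1 := by decide
  -- p ≠ r case gives 0
  have hzero : ∀ p q r s : Fin 2, p ≠ r → m p q r s = 0 := by
    intro p q r s hpr
    have h := hD p q r s
    have hc : (if p = 0 then 1 else -1 : ℂ) * (if r = 0 then 1 else -1) = -1 := by
      rcases two p with hp | hp <;> rcases two r with hr | hr <;> subst hp <;> subst hr <;>
        first
        | exact absurd rfl hpr
        | norm_num
    rw [hc, neg_one_mul] at h
    have h2 : (2 : ℂ) * m p q r s = 0 := by linear_combination h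
    rcases mul_eq_zero.mp h2 with h3 | h3
    · exact absurd h3 two_ne_zero
    · exact h3
  by_cases hpr : p = r
  · subst hpr
    have heq : m 0 q 0 s = m 1 q 1 s := by
      have := hS 0 q 0 s; simpa using this
    have hs := hsum q s
    rw [← heq] at hs
    by_cases hqs : q = s
    · subst hqs
      rw [if_pos rfl] at hs
      have h0 : m 0 q 0 q = 2⁻¹ := by linear_combination hs / 2
      have h1 : m 1 q 1 q = 2⁻¹ := by rw [← heq]; exact h0
      rw [if_pos ⟨rfl, rfl⟩]
      rcases two p with hp | hp <;> subst hp
      · exact h0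
      · exact h1
    · have h0 : m 0 q 0 s = 0 := by
        rw [if_neg hqs] at hs
        linear_combination hs / 2
      have h1 : m 1 q 1 s = 0 := by rw [← heq]; exact h0
      rw [if_neg (by tauto)]
      rcases two p with hp | hp <;> subst hp
      · exact h0
      · exact h1
  · rw [if_neg (by tauto)]
    exact hzero p q r s hpr


lemma twirl {n : ℕ} (A : Matrix (Fin n → Fin 2) (Fin n → Fin 2) ℂ) (j c : Fin n → Fin 2) :
    (∫ V : Fin n → G, ((tensorProd V)ᴴ * A * tensorProd V) j c ∂(Measure.pi fun _ => μ))
      = if j = c then Matrix.trace A * ((2 : ℂ) ^ n)⁻¹ else 0 := by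
  simp_rw [entry_expand]
  rw [integral_finset_sum _ fun a _ => integrable_finset_sum _ fun b _ =>
    (integrable_prod_entries μ (a := a) (j := j) (b := b) (c := c)).const_mul (A a b)]
  have step : ∀ a : Fin n → Fin 2, (∫ V : Fin n → G, ∑ b : Fin n → Fin 2, A a b *
      ∏ i, (conj ((V i : Matrix (Fin 2) (Fin 2) ℂ) (a i) (j i)) *
        (V i : Matrix (Fin 2) (Fin 2) ℂ) (b i) (c i)) ∂(Measure.pi fun _ => μ))
      = ∑ b : Fin n → Fin 2, A a b * (if a = b ∧ j = c then ((2:ℂ)^n)⁻¹ else 0) := by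
    intro a
    rw [integral_finset_sum _ fun b _ =>
      (integrable_prod_entries μ (a := a) (j := j) (b := b) (c := c)).const_mul (A a b)]
    refine Finset.sum_congr rfl fun b _ => ?_
    rw [integral_const_mul, pi_moment]
    congr 1
    simp_rw [haar_moment' μ]
    by_cases h : a = b ∧ j = c
    · rw [if_pos h]
      have : ∀ i, ((a i = b i) ∧ (j i = c i)) := fun i => ⟨congrFun h.1 i, congrFun h.2 i⟩
      calc (∏ i, if a i = b i ∧ j i = c i then (2:ℂ)⁻¹ else 0)
          = ∏ _i : Fin n, (2:ℂ)⁻¹ := Finset.prod_congr rfl fun i _ => if_pos (this i)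
        _ = ((2:ℂ)^n)⁻¹ := by rw [Finset.prod_const, Finset.card_univ, Fintype.card_fin, inv_pow]
    · rw [if_neg h]
      have : ∃ i, ¬(a i = b i ∧ j i = c i) := by
        by_contra hc
        push_neg at hc
        exact h ⟨funext fun i => (hc i).1, funext fun i => (hc i).2⟩
      obtain ⟨i, hi⟩ := this
      exact Finset.prod_eq_zero (Finset.mem_univ i) (if_neg hi)
  simp_rw [step]
  by_cases hjc : j = c
  · subst hjc
    simp only [and_true, mul_ite, mul_zero, Finset.sum_ite_eq, Finset.mem_univ, if_true, if_pos rfl]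
    rw [← Finset.sum_mul]
    rfl
  · simp [hjc]

end

lemma trace_expand {I : Type*} [Fintype I] [DecidableEq I] (P Q ρ : Matrix I I ℂ) :
    Matrix.trace (P * ρ * Q * ρ)
      = ∑ j, ∑ d, ∑ g, ∑ c, (P j c * ρ c d) * (Q d g * ρ g j) := by
  have h1 : P * ρ * Q * ρ = (P * ρ) * (Q * ρ) := by rw [Matrix.mul_assoc (P * ρ)]
  rw [h1, Matrix.trace]
  simp only [Matrix.diag_apply, Matrix.mul_apply, Finset.sum_mul, Finset.mul_sum]

section
variable [MeasurableSpace G] [BorelSpace G]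
variable (μ : Measure G) [μ.IsHaarMeasure] [IsProbabilityMeasure μ]

lemma integrable_twirl_entry {n : ℕ} (A : Matrix (Fin n → Fin 2) (Fin n → Fin 2) ℂ)
    (j c : Fin n → Fin 2) :
    Integrable (fun V : Fin n → G => ((tensorProd V)ᴴ * A * tensorProd V) j c)
      (Measure.pi fun _ => μ) := by
  simp_rw [entry_expand]
  exact integrable_finset_sum _ fun a _ => integrable_finset_sum _ fun b _ =>
    (integrable_prod_entries μ (a := a) (j := j) (b := b) (c := c)).const_mul _

lemma main1 {n : ℕ} (A B ρ : Matrix (Fin n → Fin 2) (Fin n → Fin 2) ℂ) :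
    ∫ p : (Fin n → G) × (Fin n → G),
        Matrix.trace
          ((tensorProd p.1)ᴴ * A * tensorProd p.1 * ρ *
            (tensorProd p.2)ᴴ * B * tensorProd p.2 * ρ)
      ∂((Measure.pi fun _ => μ).prod (Measure.pi fun _ => μ))
      = Matrix.trace A * Matrix.trace B * Matrix.trace (ρ * ρ) / (2 : ℂ) ^ (2 * n) := by
  have hPQ : ∀ (V W : Fin n → G),
      (tensorProd V)ᴴ * A * tensorProd V * ρ * (tensorProd W)ᴴ * B * tensorProd W * ρ
        = ((tensorProd V)ᴴ * A * tensorProd V) * ρ * ((tensorProd W)ᴴ * B * tensorProd W) * ρ := by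
    intros; simp only [Matrix.mul_assoc]
  have hint : ∀ (j c d g : Fin n → Fin 2), Integrable (fun p : (Fin n → G) × (Fin n → G) =>
      (((tensorProd p.1)ᴴ * A * tensorProd p.1) j c * ρ c d) *
        (((tensorProd p.2)ᴴ * B * tensorProd p.2) d g * ρ g j))
      ((Measure.pi fun _ => μ).prod (Measure.pi fun _ => μ)) :=
    fun j c d g => ((integrable_twirl_entry μ A j c).mul_const _).mul_prod
      ((integrable_twirl_entry μ B d g).mul_const _)
  calc ∫ p : (Fin n → G) × (Fin n → G),
        Matrix.trace
          ((tensorProd p.1)ᴴ * A * tensorProd p.1 * ρ *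
            (tensorProd p.2)ᴴ * B * tensorProd p.2 * ρ)
      ∂((Measure.pi fun _ => μ).prod (Measure.pi fun _ => μ))
      = ∫ p : (Fin n → G) × (Fin n → G), ∑ j, ∑ d, ∑ g, ∑ c,
          ((((tensorProd p.1)ᴴ * A * tensorProd p.1) j c * ρ c d) *
           ((((tensorProd p.2)ᴴ * B * tensorProd p.2)) d g * ρ g j))
      ∂((Measure.pi fun _ => μ).prod (Measure.pi fun _ => μ)) := by
        congr 1; funext p; rw [hPQ, trace_expand]
    _ = ∑ j, ∑ d, ∑ g, ∑ c, ∫ p : (Fin n → G) × (Fin n → G),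
          ((((tensorProd p.1)ᴴ * A * tensorProd p.1) j c * ρ c d) *
           ((((tensorProd p.2)ᴴ * B * tensorProd p.2)) d g * ρ g j))
      ∂((Measure.pi fun _ => μ).prod (Measure.pi fun _ => μ)) := by
        rw [integral_finset_sum _ fun j _ => integrable_finset_sum _ fun d _ =>
          integrable_finset_sum _ fun g _ => integrable_finset_sum _ fun c _ => hint j c d g]
        refine Finset.sum_congr rfl fun j _ => ?_
        rw [integral_finset_sum _ fun d _ => integrable_finset_sum _ fun g _ =>
          integrable_finset_sum _ fun c _ => hint j c d g]
        refine Finset.sum_congr rfl fun d _ => ?_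
        rw [integral_finset_sum _ fun g _ => integrable_finset_sum _ fun c _ => hint j c d g]
        refine Finset.sum_congr rfl fun g _ => ?_
        rw [integral_finset_sum _ fun c _ => hint j c d g]
    _ = ∑ j, ∑ d, ∑ g, ∑ c,
          ((if j = c then Matrix.trace A * ((2:ℂ)^n)⁻¹ else 0) * ρ c d) *
          ((if d = g then Matrix.trace B * ((2:ℂ)^n)⁻¹ else 0) * ρ g j) := by
        refine Finset.sum_congr rfl fun j _ => Finset.sum_congr rfl fun d _ =>
          Finset.sum_congr rfl fun g _ => Finset.sum_congr rfl fun c _ => ?_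
        rw [integral_prod_mul (fun V : Fin n → G =>
            ((tensorProd V)ᴴ * A * tensorProd V) j c * ρ c d)
          (fun W : Fin n → G => ((tensorProd W)ᴴ * B * tensorProd W) d g * ρ g j),
          integral_mul_const, integral_mul_const, twirl μ A j c, twirl μ B d g]
    _ = ∑ j, ∑ d, (Matrix.trace A * ((2:ℂ)^n)⁻¹ * ρ j d) *
          (Matrix.trace B * ((2:ℂ)^n)⁻¹ * ρ d j) := by
        refine Finset.sum_congr rfl fun j _ => Finset.sum_congr rfl fun d _ => ?_
        rw [Finset.sum_eq_single d]
        · rw [Finset.sum_eq_single j]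
          · rw [if_pos rfl, if_pos rfl]
          · intro c _ hc; rw [if_neg (Ne.symm hc)]; ring
          · intro h; exact absurd (Finset.mem_univ j) h
        · intro g _ hg
          refine Finset.sum_eq_zero fun c _ => ?_
          rw [if_neg (Ne.symm hg)]
          ring
        · intro h; exact absurd (Finset.mem_univ d) h
    _ = Matrix.trace A * Matrix.trace B * Matrix.trace (ρ * ρ) / (2 : ℂ) ^ (2 * n) := by
        have htr2 : Matrix.trace (ρ * ρ) = ∑ j, ∑ d, ρ j d * ρ d j := by
          simp [Matrix.trace, Matrix.diag, Matrix.mul_apply]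
        rw [htr2, two_mul, pow_add]
        rw [Finset.mul_sum, Finset.sum_div]
        refine Finset.sum_congr rfl fun j _ => ?_
        rw [Finset.mul_sum, Finset.sum_div]
        refine Finset.sum_congr rfl fun d _ => ?_
        rw [div_eq_mul_inv, mul_inv]
        ring

end

section
variable [MeasurableSpace G] [BorelSpace G]
variable (μ : Measure G) [μ.IsHaarMeasure] [IsProbabilityMeasure μ]

lemma integrable_trace {n : ℕ} (A B ρ : Matrix (Fin n → Fin 2) (Fin n → Fin 2) ℂ) :
    Integrable (fun p : (Fin n → G) × (Fin n → G) =>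
      Matrix.trace
        ((tensorProd p.1)ᴴ * A * tensorProd p.1 * ρ *
          (tensorProd p.2)ᴴ * B * tensorProd p.2 * ρ))
      ((Measure.pi fun _ => μ).prod (Measure.pi fun _ => μ)) := by
  have hEq : (fun p : (Fin n → G) × (Fin n → G) =>
      Matrix.trace
        ((tensorProd p.1)ᴴ * A * tensorProd p.1 * ρ *
          (tensorProd p.2)ᴴ * B * tensorProd p.2 * ρ))
      = fun p => ∑ j, ∑ d, ∑ g, ∑ c,
          ((((tensorProd p.1)ᴴ * A * tensorProd p.1) j c * ρ c d) *
           (((tensorProd p.2)ᴴ * B * tensorProd p.2) d g * ρ g j)) := by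
    funext p
    rw [show (tensorProd p.1)ᴴ * A * tensorProd p.1 * ρ *
          (tensorProd p.2)ᴴ * B * tensorProd p.2 * ρ
        = ((tensorProd p.1)ᴴ * A * tensorProd p.1) * ρ *
          ((tensorProd p.2)ᴴ * B * tensorProd p.2) * ρ by simp only [Matrix.mul_assoc],
      trace_expand]
  rw [hEq]
  exact integrable_finset_sum _ fun j _ => integrable_finset_sum _ fun d _ =>
    integrable_finset_sum _ fun g _ => integrable_finset_sum _ fun c _ =>
      ((integrable_twirl_entry μ A j c).mul_const _).mul_prod
        ((integrable_twirl_entry μ B d g).mul_const _)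

end

/-- **Mean of the doubly locally-twirled trace.**
For independent locally Haar-random encodings `V, W`,
`∫∫ tr((⊗V)* A (⊗V) ρ (⊗W)* B (⊗W) ρ) = tr(A) tr(B) tr(ρ²) / 2^{2n}`; in particular,
if all `A_λ` are traceless, the mean of `Σ_λ tr((⊗V)* A_λ (⊗V) ρ (⊗W)* A_λ (⊗W) ρ)` is zero. -/
theorem local_haar_double_twirl_trace (n : ℕ) (hn : 1 ≤ n)
    [MeasurableSpace (Matrix.unitaryGroup (Fin 2) ℂ)]
    [BorelSpace (Matrix.unitaryGroup (Fin 2) ℂ)]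
    (μ : Measure (Matrix.unitaryGroup (Fin 2) ℂ))
    [μ.IsHaarMeasure] [IsProbabilityMeasure μ] :
    (∀ A B ρ : Matrix (Fin n → Fin 2) (Fin n → Fin 2) ℂ,
        ∫ p : (Fin n → Matrix.unitaryGroup (Fin 2) ℂ) × (Fin n → Matrix.unitaryGroup (Fin 2) ℂ),
            Matrix.trace
              ((tensorProd p.1)ᴴ * A * tensorProd p.1 * ρ *
                (tensorProd p.2)ᴴ * B * tensorProd p.2 * ρ)
          ∂((Measure.pi fun _ => μ).prod (Measure.pi fun _ => μ))
          = Matrix.trace A * Matrix.trace B * Matrix.trace (ρ * ρ) / (2 : ℂ) ^ (2 * n)) ∧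
      ∀ (ρ : Matrix (Fin n → Fin 2) (Fin n → Fin 2) ℂ) (Λ : ℕ)
        (A : Fin Λ → Matrix (Fin n → Fin 2) (Fin n → Fin 2) ℂ),
        (∀ lam, Matrix.trace (A lam) = 0) →
        ∫ p : (Fin n → Matrix.unitaryGroup (Fin 2) ℂ) × (Fin n → Matrix.unitaryGroup (Fin 2) ℂ),
            ∑ lam : Fin Λ,
              Matrix.trace
                ((tensorProd p.1)ᴴ * A lam * tensorProd p.1 * ρ *
                  (tensorProd p.2)ᴴ * A lam * tensorProd p.2 * ρ)
          ∂((Measure.pi fun _ => μ).prod (Measure.pi fun _ => μ))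
          = 0 := by
  constructor
  · exact fun A B ρ => main1 μ A B ρ
  · intro ρ Λ A hA
    rw [integral_finset_sum _ fun lam _ => integrable_trace μ (A lam) (A lam) ρ]
    refine Finset.sum_eq_zero fun lam _ => ?_
    rw [main1 μ (A lam) (A lam) ρ, hA lam]
    simp
end

section
/- Let n ≥ 1, let ν_n be the product of n independent copies of the normalized Haar probability measure on U(2), and let M be any 4ⁿ×4ⁿ complex matrix (indexed by pairs of bit strings in {0,1}ⁿ × {0,1}ⁿ). Let e₀ ∈ ℂ^{2ⁿ} be the computational basis vector indexed by the all-zeros bit string and E₀ := e₀ ⊗ e₀. Then ∫ E₀* · ((⊗W) ⊗ (⊗W))* M ((⊗W) ⊗ (⊗W)) · E₀ dν_n(W) = 6⁻ⁿ · tr(P M), where P is the 4ⁿ×4ⁿ matrix with entries P((a,b),(c,d)) = ∏_{i=1}^n (δ_{a_i c_i} δ_{b_i d_i} + δ_{a_i d_i} δ_{b_i c_i}). -/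
open MeasureTheory Matrix Kronecker

/-- The `4ⁿ × 4ⁿ` matrix `P = ⊗ᵢ (I + SWAPᵢ)`, with entries
`P((a,b),(c,d)) = ∏ᵢ (δ_{aᵢcᵢ} δ_{bᵢdᵢ} + δ_{aᵢdᵢ} δ_{bᵢcᵢ})`. -/
def swapSum (n : ℕ) :
    Matrix ((Fin n → Fin 2) × (Fin n → Fin 2)) ((Fin n → Fin 2) × (Fin n → Fin 2)) ℂ :=
  Matrix.of fun p q => ∏ i,
    ((if p.1 i = q.1 i then (1 : ℂ) else 0) * (if p.2 i = q.2 i then (1 : ℂ) else 0) +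
      (if p.1 i = q.2 i then (1 : ℂ) else 0) * (if p.2 i = q.1 i then (1 : ℂ) else 0))

/-- The computational all-zeros basis vector `e₀ ∈ ℂ^{2ⁿ}`. -/
def eZero (n : ℕ) : (Fin n → Fin 2) → ℂ := fun j => if j = fun _ => 0 then 1 else 0


abbrev U2 := Matrix.unitaryGroup (Fin 2) ℂ


noncomputable def ent (U : U2) (a : Fin 2) : ℂ := (U : Matrix (Fin 2) (Fin 2) ℂ) a 0

noncomputable def g (a b c d : Fin 2) (U : U2) : ℂ :=
  (starRingEnd ℂ) (ent U a) * (starRingEnd ℂ) (ent U b) * (ent U c * ent U d)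

lemma continuous_ent (a : Fin 2) : Continuous fun U : U2 => ent U a := by
  have : Continuous fun M : Matrix (Fin 2) (Fin 2) ℂ => M a 0 :=
    (continuous_apply (0 : Fin 2)).comp (continuous_apply a)
  exact this.comp continuous_subtype_val

lemma continuous_g (a b c d : Fin 2) : Continuous (g a b c d) :=
  ((Complex.continuous_conj.comp (continuous_ent a)).mul
    (Complex.continuous_conj.comp (continuous_ent b))).mul
    ((continuous_ent c).mul (continuous_ent d))

lemma ent_normSq (U : U2) :
    (starRingEnd ℂ) (ent U 0) * ent U 0 + (starRingEnd ℂ) (ent U 1) * ent U 1 = 1 := by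
  have h : (star (U : Matrix (Fin 2) (Fin 2) ℂ) * (U : Matrix (Fin 2) (Fin 2) ℂ)) 0 0 = 1 := by
    rw [U.2.1]; simp
  simpa [Matrix.mul_apply, Fin.sum_univ_two, Matrix.star_apply, ent] using h

lemma ent_norm_le (U : U2) (a : Fin 2) : ‖ent U a‖ ≤ 1 := by
  have h := ent_normSq U
  have h0 : ((Complex.normSq (ent U 0) : ℂ) + (Complex.normSq (ent U 1) : ℂ)) = 1 := by
    rw [Complex.normSq_eq_conj_mul_self, Complex.normSq_eq_conj_mul_self]; exact h
  have h1 : Complex.normSq (ent U 0) + Complex.normSq (ent U 1) = 1 := by exact_mod_cast h0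
  have h2 : Complex.normSq (ent U a) ≤ 1 := by
    have n0 := Complex.normSq_nonneg (ent U 0)
    have n1 := Complex.normSq_nonneg (ent U 1)
    fin_cases a <;> simp only [Fin.zero_eta, Fin.mk_one, Fin.isValue] <;> nlinarith
  have h3 : ‖ent U a‖ ^ 2 ≤ 1 := by rw [← Complex.sq_norm] at h2; exact h2
  nlinarith [norm_nonneg (ent U a)]

lemma g_norm_le (a b c d : Fin 2) (U : U2) : ‖g a b c d U‖ ≤ 1 := by
  unfold g
  have := ent_norm_le U a; have := ent_norm_le U b
  have := ent_norm_le U c; have := ent_norm_le U d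
  simp only [norm_mul, RCLike.norm_conj]
  have h0 : (0:ℝ) ≤ ‖ent U a‖ := norm_nonneg _
  have h1 : (0:ℝ) ≤ ‖ent U b‖ := norm_nonneg _
  have h2 : (0:ℝ) ≤ ‖ent U c‖ := norm_nonneg _
  have h3 : (0:ℝ) ≤ ‖ent U d‖ := norm_nonneg _
  exact mul_le_one₀ (mul_le_one₀ ‹‖ent U a‖ ≤ 1› h1 ‹‖ent U b‖ ≤ 1›)
    (mul_nonneg h2 h3) (mul_le_one₀ ‹‖ent U c‖ ≤ 1› h3 ‹‖ent U d‖ ≤ 1›)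

set_option linter.unusedSectionVars false

section
variable [MeasurableSpace U2] [BorelSpace U2] (μ : Measure U2)
  [μ.IsHaarMeasure] [IsProbabilityMeasure μ]

lemma integrable_g (a b c d : Fin 2) : Integrable (g a b c d) μ := by
  refine ⟨(continuous_g a b c d).aestronglyMeasurable, ?_⟩
  exact HasFiniteIntegral.of_bounded (C := 1) (Filter.Eventually.of_forall (g_norm_le a b c d))

noncomputable def mom (a b c d : Fin 2) : ℂ := ∫ U, g a b c d U ∂μ
end



noncomputable def Vphase : U2 :=
  ⟨!![Complex.I, 0; 0, 1], by
    rw [Matrix.mem_unitaryGroup_iff]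
    ext i j
    fin_cases i <;> fin_cases j <;>
      simp [Matrix.mul_apply, Fin.sum_univ_two, Matrix.star_apply, Matrix.one_apply]⟩

noncomputable def Vswap : U2 :=
  ⟨!![0, 1; 1, 0], by
    rw [Matrix.mem_unitaryGroup_iff]
    ext i j
    fin_cases i <;> fin_cases j <;>
      simp [Matrix.mul_apply, Fin.sum_univ_two, Matrix.star_apply, Matrix.one_apply]⟩

noncomputable def Vrot : U2 :=
  ⟨!![3/5, 4/5; -4/5, 3/5], by
    rw [Matrix.mem_unitaryGroup_iff]
    ext i j
    fin_cases i <;> fin_cases j <;>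
      simp [Matrix.mul_apply, Fin.sum_univ_two, Matrix.star_apply, Matrix.one_apply, map_ofNat] <;> norm_num⟩


lemma ent_mul (V U : U2) (a : Fin 2) :
    ent (V * U) a
      = (V : Matrix (Fin 2) (Fin 2) ℂ) a 0 * ent U 0
        + (V : Matrix (Fin 2) (Fin 2) ℂ) a 1 * ent U 1 := by
  simp [ent, Submonoid.coe_mul, Matrix.mul_apply, Fin.sum_univ_two]

lemma ent_phase (U : U2) (a : Fin 2) :
    ent (Vphase * U) a = (if a = 0 then Complex.I else 1) * ent U a := by
  rw [ent_mul]; fin_cases a <;> simp [Vphase]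

lemma ent_swap_zero (U : U2) : ent (Vswap * U) 0 = ent U 1 := by
  rw [ent_mul]; simp [Vswap]

lemma ent_swap_one (U : U2) : ent (Vswap * U) 1 = ent U 0 := by
  rw [ent_mul]; simp [Vswap]

lemma ent_rot_zero (U : U2) : ent (Vrot * U) 0 = (3/5) * ent U 0 + (4/5) * ent U 1 := by
  rw [ent_mul]; simp [Vrot]

set_option linter.unusedSectionVars false

section
variable [MeasurableSpace U2] [BorelSpace U2] (μ : Measure U2)
  [μ.IsHaarMeasure] [IsProbabilityMeasure μ]

lemma mom_inv (V : U2) (a b c d : Fin 2) :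
    mom μ a b c d = ∫ U, g a b c d (V * U) ∂μ :=
  (integral_mul_left_eq_self (g a b c d) V).symm

lemma eq_zero_of_self_eq_mul {z w : ℂ} (hw : w ≠ 1) (h : z = w * z) : z = 0 := by
  by_contra h0
  exact hw (mul_right_cancel₀ h0 (by rw [← h, one_mul]))

lemma mom_vanish (a b c d : Fin 2)
    (h : ((if a = 0 then 1 else 0) + (if b = 0 then 1 else 0) : ℕ)
        ≠ (if c = 0 then 1 else 0) + (if d = 0 then 1 else 0)) :
    mom μ a b c d = 0 := by
  have hw : (starRingEnd ℂ) (if a = 0 then Complex.I else 1)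
      * (starRingEnd ℂ) (if b = 0 then Complex.I else 1)
      * ((if c = 0 then Complex.I else 1) * (if d = 0 then Complex.I else 1)) ≠ 1 := by
    fin_cases a <;> fin_cases b <;> fin_cases c <;> fin_cases d <;>
      simp_all [Complex.ext_iff] <;> norm_num
  have key : mom μ a b c d
      = ((starRingEnd ℂ) (if a = 0 then Complex.I else 1) * (starRingEnd ℂ) (if b = 0 then Complex.I else 1) * ((if c = 0 then Complex.I else 1) * (if d = 0 then Complex.I else 1))) * mom μ a b c d := by
    have hpt : ∀ U : U2, g a b c d (Vphase * U)
        = ((starRingEnd ℂ) (if a = 0 then Complex.I else 1) * (starRingEnd ℂ) (if b = 0 then Complex.I else 1) * ((if c = 0 then Complex.I else 1) * (if d = 0 then Complex.I else 1))) * g a b c d U := by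
      intro U
      unfold g
      rw [ent_phase, ent_phase, ent_phase, ent_phase]
      simp only [_root_.map_mul]
      ring
    conv_lhs => rw [mom_inv μ Vphase a b c d]
    rw [integral_congr_ae (Filter.Eventually.of_forall hpt), integral_const_mul]
    rfl
  exact eq_zero_of_self_eq_mul hw key

lemma mom_beta_eq :
    mom μ 0 1 0 1 = mom μ 1 0 1 0 ∧ mom μ 0 1 0 1 = mom μ 0 1 1 0 ∧
      mom μ 0 1 0 1 = mom μ 1 0 0 1 := by
  refine ⟨?_, ?_, ?_⟩ <;>
  · unfold mom
    apply integral_congr_ae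
    filter_upwards with U
    unfold g
    ring

lemma mom_swap : mom μ 0 0 0 0 = mom μ 1 1 1 1 := by
  rw [mom_inv μ Vswap 0 0 0 0]
  apply integral_congr_ae
  filter_upwards with U
  unfold g
  rw [ent_swap_zero]

lemma mom_norm_eq : mom μ 0 0 0 0 + mom μ 0 1 0 1 + mom μ 1 0 1 0 + mom μ 1 1 1 1 = 1 := by
  have hpt : ∀ U : U2, g 0 0 0 0 U + g 0 1 0 1 U + g 1 0 1 0 U + g 1 1 1 1 U = 1 := by
    intro U
    have h := ent_normSq U
    unfold g
    linear_combination ((starRingEnd ℂ) (ent U 0) * ent U 0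
      + (starRingEnd ℂ) (ent U 1) * ent U 1 + 1) * h
  have key : ∫ U, (g 0 0 0 0 U + g 0 1 0 1 U + g 1 0 1 0 U + g 1 1 1 1 U) ∂μ = 1 := by
    rw [integral_congr_ae (Filter.Eventually.of_forall hpt)]
    simp
  rw [integral_add (f := fun U => g 0 0 0 0 U + g 0 1 0 1 U + g 1 0 1 0 U)
        (g := g 1 1 1 1)
        (((integrable_g μ 0 0 0 0).add (integrable_g μ 0 1 0 1)).add
          (integrable_g μ 1 0 1 0)) (integrable_g μ 1 1 1 1),
      integral_add (f := fun U => g 0 0 0 0 U + g 0 1 0 1 U) (g := g 1 0 1 0)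
        ((integrable_g μ 0 0 0 0).add (integrable_g μ 0 1 0 1)) (integrable_g μ 1 0 1 0),
      integral_add (integrable_g μ 0 0 0 0) (integrable_g μ 0 1 0 1)] at key
  exact key

noncomputable def co : Fin 2 → ℂ := ![3/5, 4/5]

lemma mom_rot_eq : mom μ 0 0 0 0
    = ∑ t : Fin 2 × Fin 2 × Fin 2 × Fin 2,
        (starRingEnd ℂ) (co t.1) * (starRingEnd ℂ) (co t.2.1) * (co t.2.2.1 * co t.2.2.2)
          * mom μ t.1 t.2.1 t.2.2.1 t.2.2.2 := by
  rw [mom_inv μ Vrot 0 0 0 0]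
  have hpt : ∀ U : U2, g 0 0 0 0 (Vrot * U)
      = ∑ t : Fin 2 × Fin 2 × Fin 2 × Fin 2,
          (starRingEnd ℂ) (co t.1) * (starRingEnd ℂ) (co t.2.1) * (co t.2.2.1 * co t.2.2.2)
            * g t.1 t.2.1 t.2.2.1 t.2.2.2 U := by
    intro U
    unfold g
    rw [ent_rot_zero]
    simp only [Fintype.sum_prod_type, Fin.sum_univ_two, co,
      Matrix.cons_val_zero, Matrix.cons_val_one, Matrix.head_cons, map_div₀, map_ofNat,
      _root_.map_mul, map_add]
    push_cast
    ring
  rw [integral_congr_ae (Filter.Eventually.of_forall hpt),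
    integral_finset_sum _ (fun t _ => ((integrable_g μ _ _ _ _).const_mul _))]
  simp only [integral_const_mul]
  rfl

lemma mom_values : mom μ 0 0 0 0 = 1/3 ∧ mom μ 0 1 0 1 = 1/6 := by
  obtain ⟨hb1, hb2, hb3⟩ := mom_beta_eq μ
  have hsw := mom_swap μ
  have hn := mom_norm_eq μ
  have hr := mom_rot_eq μ
  simp only [Fintype.sum_prod_type, Fin.sum_univ_two] at hr
  rw [mom_vanish μ 0 0 0 1 (by norm_num), mom_vanish μ 0 0 1 0 (by norm_num),
      mom_vanish μ 0 0 1 1 (by norm_num), mom_vanish μ 0 1 0 0 (by norm_num),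
      mom_vanish μ 0 1 1 1 (by norm_num), mom_vanish μ 1 0 0 0 (by norm_num),
      mom_vanish μ 1 0 1 1 (by norm_num), mom_vanish μ 1 1 0 0 (by norm_num),
      mom_vanish μ 1 1 0 1 (by norm_num), mom_vanish μ 1 1 1 0 (by norm_num)] at hr
  rw [← hsw, ← hb1, ← hb2, ← hb3] at hr
  rw [← hsw, ← hb1] at hn
  simp only [co, Matrix.cons_val_zero, Matrix.cons_val_one, Matrix.head_cons, map_div₀,
    map_ofNat] at hr
  constructor
  · linear_combination (1/3) * hn + (625/864) * hr
  · linear_combination (1/6) * hn - (625/864) * hr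


lemma mom_eq (a b c d : Fin 2) :
    mom μ a b c d
      = ((if a = c then (1:ℂ) else 0) * (if b = d then (1:ℂ) else 0)
          + (if a = d then (1:ℂ) else 0) * (if b = c then (1:ℂ) else 0)) / 6 := by
  fin_cases a <;> fin_cases b <;> fin_cases c <;> fin_cases d <;>
    simp only [Fin.zero_eta, Fin.mk_one, Fin.isValue] <;> norm_num <;>
    first
      | (exact mom_vanish μ _ _ _ _ (by decide))
      | (exact (mom_values μ).1)
      | (rw [← mom_swap μ]; exact (mom_values μ).1)
      | (exact (mom_values μ).2)
      | (rw [← (mom_beta_eq μ).1]; exact (mom_values μ).2)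
      | (rw [← (mom_beta_eq μ).2.1]; exact (mom_values μ).2)
      | (rw [← (mom_beta_eq μ).2.2]; exact (mom_values μ).2)

end

lemma swapSum_symm (n : ℕ) (p q : (Fin n → Fin 2) × (Fin n → Fin 2)) :
    swapSum n p q = swapSum n q p := by
  unfold swapSum
  simp only [Matrix.of_apply]
  apply Finset.prod_congr rfl
  intro i _
  have h1 : ∀ x y : Fin 2, (if x = y then (1:ℂ) else 0) = (if y = x then 1 else 0) := by
    intro x y; simp [eq_comm]
  rw [h1 (p.1 i) (q.1 i), h1 (p.2 i) (q.2 i), h1 (p.1 i) (q.2 i), h1 (p.2 i) (q.1 i)]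
  ring

lemma dot_indicator {ι : Type*} [Fintype ι] [DecidableEq ι]
    (A : Matrix ι ι ℂ) (z : ι) :
    star (fun p => if p = z then (1:ℂ) else 0) ⬝ᵥ
      A.mulVec (fun p => if p = z then (1:ℂ) else 0) = A z z := by
  simp [dotProduct, mulVec, Pi.star_apply, apply_ite, mul_ite, ite_mul,
    Finset.sum_ite_eq', Finset.sum_ite_eq]


/-- **Second-moment local twirl against the all-zeros state.**
For a tuple `W` of independent Haar-random unitaries on `ℂ²` and any `4ⁿ × 4ⁿ` matrix `M`,
`∫ E₀* ((⊗W) ⊗ (⊗W))* M ((⊗W) ⊗ (⊗W)) E₀ = 6⁻ⁿ tr(P M)` where `E₀ = e₀ ⊗ e₀`. -/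
theorem local_haar_second_moment_twirl (n : ℕ) (hn : 1 ≤ n)
    [MeasurableSpace (Matrix.unitaryGroup (Fin 2) ℂ)]
    [BorelSpace (Matrix.unitaryGroup (Fin 2) ℂ)]
    (μ : Measure (Matrix.unitaryGroup (Fin 2) ℂ))
    [μ.IsHaarMeasure] [IsProbabilityMeasure μ]
    (M : Matrix ((Fin n → Fin 2) × (Fin n → Fin 2)) ((Fin n → Fin 2) × (Fin n → Fin 2)) ℂ) :
    ∫ W : Fin n → Matrix.unitaryGroup (Fin 2) ℂ,
        star (fun p : (Fin n → Fin 2) × (Fin n → Fin 2) => eZero n p.1 * eZero n p.2) ⬝ᵥ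
          (((tensorProd W ⊗ₖ tensorProd W)ᴴ * M * (tensorProd W ⊗ₖ tensorProd W)).mulVec
            fun p : (Fin n → Fin 2) × (Fin n → Fin 2) => eZero n p.1 * eZero n p.2)
        ∂(Measure.pi fun _ => μ)
      = ((6 : ℂ) ^ n)⁻¹ * Matrix.trace (swapSum n * M) := by
  classical
  set z0 : Fin n → Fin 2 := fun _ => 0 with hz0
  set Z : (Fin n → Fin 2) × (Fin n → Fin 2) := (z0, z0) with hZ
  -- the vector is the indicator of Z
  have hv : (fun p : (Fin n → Fin 2) × (Fin n → Fin 2) => eZero n p.1 * eZero n p.2)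
      = fun p => if p = Z then (1:ℂ) else 0 := by
    funext p
    unfold eZero
    by_cases h1 : p.1 = z0 <;> by_cases h2 : p.2 = z0 <;>
      simp_all [Prod.ext_iff, hZ]
  -- pointwise form of the integrand
  have hpt : ∀ W : Fin n → U2,
      (star (fun p : (Fin n → Fin 2) × (Fin n → Fin 2) => eZero n p.1 * eZero n p.2) ⬝ᵥ
        (((tensorProd W ⊗ₖ tensorProd W)ᴴ * M * (tensorProd W ⊗ₖ tensorProd W)).mulVec
          fun p : (Fin n → Fin 2) × (Fin n → Fin 2) => eZero n p.1 * eZero n p.2))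
      = ∑ t : ((Fin n → Fin 2) × (Fin n → Fin 2)) × ((Fin n → Fin 2) × (Fin n → Fin 2)),
          M t.1 t.2 * ∏ i, g (t.1.1 i) (t.1.2 i) (t.2.1 i) (t.2.2 i) (W i) := by
    intro W
    rw [hv, dot_indicator]
    have hT : ∀ p : (Fin n → Fin 2) × (Fin n → Fin 2),
        (tensorProd W ⊗ₖ tensorProd W) p Z = ∏ i, (ent (W i) (p.1 i) * ent (W i) (p.2 i)) := by
      intro p
      cases p with
      | mk p1 p2 =>
        simp only [kroneckerMap_apply, tensorProd, Matrix.of_apply, hZ]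
        rw [← Finset.prod_mul_distrib]
        rfl
    simp only [Matrix.mul_apply, Finset.sum_mul]
    rw [Finset.sum_comm]
    conv_rhs => rw [Fintype.sum_prod_type]
    apply Finset.sum_congr rfl; intro p _
    apply Finset.sum_congr rfl; intro q _
    rw [Matrix.conjTranspose_apply, hT p, hT q, star_prod]
    simp only [g, starRingEnd_apply, star_mul', Finset.prod_mul_distrib]
    ring
  rw [integral_congr_ae (Filter.Eventually.of_forall hpt)]
  letI : MeasureSpace U2 := ⟨μ⟩
  haveI : IsProbabilityMeasure (volume : Measure U2) := ‹IsProbabilityMeasure μ›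
  have hμvol : (Measure.pi fun _ : Fin n => μ) = (volume : Measure (Fin n → U2)) := rfl
  rw [hμvol]
  rw [integral_finset_sum _ (fun t _ => Integrable.const_mul
    (Integrable.fintype_prod (f := fun i => g (t.1.1 i) (t.1.2 i) (t.2.1 i) (t.2.2 i))
      (fun i => integrable_g volume _ _ _ _)) _)]
  simp only [integral_const_mul]
  have hfub : ∀ t : ((Fin n → Fin 2) × (Fin n → Fin 2)) × ((Fin n → Fin 2) × (Fin n → Fin 2)),
      (∫ W : Fin n → U2, ∏ i, g (t.1.1 i) (t.1.2 i) (t.2.1 i) (t.2.2 i) (W i))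
        = swapSum n t.1 t.2 / 6 ^ n := by
    intro t
    rw [integral_fintype_prod_volume_eq_prod (ι := Fin n)
      (f := fun i => g (t.1.1 i) (t.1.2 i) (t.2.1 i) (t.2.2 i))]
    have : ∀ i, (∫ U : U2, g (t.1.1 i) (t.1.2 i) (t.2.1 i) (t.2.2 i) U)
        = ((if t.1.1 i = t.2.1 i then (1:ℂ) else 0) * (if t.1.2 i = t.2.2 i then (1:ℂ) else 0)
            + (if t.1.1 i = t.2.2 i then (1:ℂ) else 0) * (if t.1.2 i = t.2.1 i then (1:ℂ) else 0))
            / 6 := fun i => mom_eq μ _ _ _ _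
    rw [Finset.prod_congr rfl (fun i _ => this i), Finset.prod_div_distrib,
      Finset.prod_const, Finset.card_univ, Fintype.card_fin]
    rfl
  rw [Finset.sum_congr rfl (fun t _ => by rw [hfub t])]
  rw [Fintype.sum_prod_type]
  have htr : Matrix.trace (swapSum n * M)
      = ∑ p : (Fin n → Fin 2) × (Fin n → Fin 2), ∑ q, swapSum n p q * M q p := by
    simp [Matrix.trace, Matrix.diag, Matrix.mul_apply]
  rw [htr, Finset.mul_sum]
  rw [Finset.sum_comm]
  apply Finset.sum_congr rfl
  intro p _
  rw [Finset.mul_sum]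
  apply Finset.sum_congr rfl
  intro q _
  rw [swapSum_symm n q p]
  ring
end

section
/- Let n ≥ 1 and let A, B be 2ⁿ×2ⁿ Hermitian complex matrices. Let P be the 4ⁿ×4ⁿ matrix with entries P((a,b),(c,d)) = ∏_{i=1}^n (δ_{a_i c_i} δ_{b_i d_i} + δ_{a_i d_i} δ_{b_i c_i}). Then tr(P (A ⊗ B)) is real and satisfies (tr(P (A ⊗ B)))² ≤ 9ⁿ · tr(A²) · tr(B²). Moreover tr(P (A² ⊗ I)) = 3ⁿ tr(A²) and tr(P (I ⊗ B²)) = 3ⁿ tr(B²). -/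
open Matrix Kronecker ComplexOrder

/-! ### Auxiliary lemmas -/

lemma delta_prod {n : ℕ} (x y : Fin n → Fin 2) :
    (∏ i, if x i = y i then (1:ℂ) else 0) = if x = y then 1 else 0 := by
  by_cases h : x = y
  · simp [h]
  · obtain ⟨i, hi⟩ := Function.ne_iff.mp h
    rw [if_neg h]
    exact Finset.prod_eq_zero (Finset.mem_univ i) (by simp [hi])

lemma count_piecewise {n : ℕ} (t : Finset (Fin n)) (a : Fin n → Fin 2) :
    ∑ b : Fin n → Fin 2, (if t.piecewise b a = b then (1:ℂ) else 0) = 2 ^ t.card := by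
  simp_rw [fun b : Fin n → Fin 2 => (delta_prod (t.piecewise b a) b).symm,
    Finset.piecewise]
  calc (∑ b : Fin n → Fin 2, ∏ i, if (if i ∈ t then b i else a i) = b i then (1:ℂ) else 0)
      = ∑ b ∈ Fintype.piFinset (fun _ : Fin n => (Finset.univ : Finset (Fin 2))),
          ∏ i, if (if i ∈ t then b i else a i) = b i then (1:ℂ) else 0 := by
        rw [Fintype.piFinset_univ]
    _ = ∏ i : Fin n, ∑ v : Fin 2, if (if i ∈ t then v else a i) = v then (1:ℂ) else 0 :=
        (Finset.prod_univ_sum (fun _ => Finset.univ)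
          (fun i v => if (if i ∈ t then v else a i) = v then (1:ℂ) else 0)).symm
    _ = ∏ i : Fin n, if i ∈ t then (2:ℂ) else 1 := by
        refine Finset.prod_congr rfl fun i _ => ?_
        by_cases h : i ∈ t <;> simp [h, Finset.sum_ite_eq, Fin.sum_univ_two]
    _ = 2 ^ t.card := by
        rw [Finset.prod_ite_mem, Finset.univ_inter, Finset.prod_const]

lemma piecewise_eq_left {n : ℕ} {t : Finset (Fin n)} {a b : Fin n → Fin 2}
    (h : t.piecewise b a = b) : t.piecewise a b = a := by
  funext i
  by_cases hi : i ∈ t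
  · exact t.piecewise_eq_of_mem _ _ hi
  · rw [t.piecewise_eq_of_notMem _ _ hi]
    have := congrFun h i
    rw [t.piecewise_eq_of_notMem _ _ hi] at this
    exact this.symm

lemma indicator_split {n : ℕ} (t : Finset (Fin n)) (a b c d : Fin n → Fin 2) :
    ((∏ i ∈ t, (if a i = c i then (1:ℂ) else 0) * (if b i = d i then (1:ℂ) else 0)) *
      ∏ i ∈ Finset.univ \ t, (if a i = d i then (1:ℂ) else 0) * (if b i = c i then (1:ℂ) else 0))
    = (if t.piecewise a b = c then (1:ℂ) else 0) * (if t.piecewise b a = d then (1:ℂ) else 0) := by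
  rw [← Finset.compl_eq_univ_sdiff, Finset.prod_mul_distrib, Finset.prod_mul_distrib]
  rw [show ∀ p q r s : ℂ, (p*q)*(r*s) = (p*s)*(q*r) from fun p q r s => by ring]
  congr 1
  · rw [← delta_prod, ← Finset.prod_mul_prod_compl t]
    congr 1
    · exact Finset.prod_congr rfl fun i hi => by rw [Finset.piecewise_eq_of_mem _ _ _ hi]
    · exact Finset.prod_congr rfl fun i hi => by
        rw [Finset.piecewise_eq_of_notMem _ _ _ (Finset.mem_compl.mp hi)]
  · rw [← delta_prod, ← Finset.prod_mul_prod_compl t]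
    congr 1
    · exact Finset.prod_congr rfl fun i hi => by rw [Finset.piecewise_eq_of_mem _ _ _ hi]
    · exact Finset.prod_congr rfl fun i hi => by
        rw [Finset.piecewise_eq_of_notMem _ _ _ (Finset.mem_compl.mp hi)]

lemma trace_expand_s15 {n : ℕ} (M N : Matrix (Fin n → Fin 2) (Fin n → Fin 2) ℂ) :
    Matrix.trace (swapSum n * (M ⊗ₖ N)) =
      ∑ t : Finset (Fin n), ∑ a, ∑ b,
        M (t.piecewise a b) a * N (t.piecewise b a) b := by
  rw [Matrix.trace]
  simp only [Matrix.diag_apply, Matrix.mul_apply, swapSum, Matrix.of_apply,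
    Matrix.kroneckerMap_apply]
  rw [Fintype.sum_prod_type]
  simp_rw [Fintype.sum_prod_type]
  have key : ∀ a b : Fin n → Fin 2,
      (∑ c, ∑ d, (∏ i, ((if a i = c i then (1:ℂ) else 0) * (if b i = d i then (1:ℂ) else 0) +
          (if a i = d i then (1:ℂ) else 0) * (if b i = c i then (1:ℂ) else 0))) * (M c a * N d b))
      = ∑ t : Finset (Fin n), M (t.piecewise a b) a * N (t.piecewise b a) b := by
    intro a b
    have step1 : ∀ c d : Fin n → Fin 2,
        (∏ i, ((if a i = c i then (1:ℂ) else 0) * (if b i = d i then (1:ℂ) else 0) +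
          (if a i = d i then (1:ℂ) else 0) * (if b i = c i then (1:ℂ) else 0))) * (M c a * N d b)
        = ∑ t : Finset (Fin n),
            (if t.piecewise a b = c then (1:ℂ) else 0) *
              (if t.piecewise b a = d then (1:ℂ) else 0) * (M c a * N d b) := by
      intro c d
      rw [Finset.prod_add, Finset.powerset_univ, Finset.sum_mul]
      exact Finset.sum_congr rfl fun t _ => by rw [indicator_split]
    rw [Finset.sum_congr rfl fun c (_ : c ∈ Finset.univ) =>
      Finset.sum_congr rfl fun d (_ : d ∈ Finset.univ) => step1 c d]
    rw [Finset.sum_congr rfl fun c (_ : c ∈ Finset.univ) => Finset.sum_comm]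
    rw [Finset.sum_comm]
    refine Finset.sum_congr rfl fun t _ => ?_
    simp [Finset.sum_ite_eq, mul_ite, ite_mul, zero_mul, mul_zero]
  rw [Finset.sum_congr rfl fun a (_ : a ∈ Finset.univ) =>
    Finset.sum_congr rfl fun b (_ : b ∈ Finset.univ) => key a b]
  rw [Finset.sum_congr rfl fun x (_ : x ∈ Finset.univ) => Finset.sum_comm]
  rw [Finset.sum_comm]

lemma term_one_right {n : ℕ} (t : Finset (Fin n)) (M : Matrix (Fin n → Fin 2) (Fin n → Fin 2) ℂ) :
    (∑ a, ∑ b, M (t.piecewise a b) a *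
        (1 : Matrix (Fin n → Fin 2) (Fin n → Fin 2) ℂ) (t.piecewise b a) b)
      = 2 ^ t.card * Matrix.trace M := by
  have h1 : ∀ a b : Fin n → Fin 2,
      M (t.piecewise a b) a * (1 : Matrix (Fin n → Fin 2) (Fin n → Fin 2) ℂ) (t.piecewise b a) b
      = M a a * (if t.piecewise b a = b then (1:ℂ) else 0) := by
    intro a b
    rw [Matrix.one_apply]
    by_cases h : t.piecewise b a = b
    · rw [if_pos h, piecewise_eq_left h]
    · rw [if_neg h, mul_zero, mul_zero]
  simp_rw [h1, ← Finset.mul_sum, count_piecewise]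
  rw [← Finset.sum_mul, Matrix.trace]
  simp [Matrix.diag]
  ring

lemma term_one_left {n : ℕ} (t : Finset (Fin n)) (N : Matrix (Fin n → Fin 2) (Fin n → Fin 2) ℂ) :
    (∑ a, ∑ b, (1 : Matrix (Fin n → Fin 2) (Fin n → Fin 2) ℂ) (t.piecewise a b) a *
        N (t.piecewise b a) b)
      = 2 ^ t.card * Matrix.trace N := by
  have h1 : ∀ a b : Fin n → Fin 2,
      (1 : Matrix (Fin n → Fin 2) (Fin n → Fin 2) ℂ) (t.piecewise a b) a * N (t.piecewise b a) b
      = (if t.piecewise a b = a then (1:ℂ) else 0) * N b b := by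
    intro a b
    rw [Matrix.one_apply]
    by_cases h : t.piecewise a b = a
    · rw [if_pos h, piecewise_eq_left h]
    · rw [if_neg h, zero_mul, zero_mul]
  simp_rw [h1]
  rw [Finset.sum_comm]
  simp_rw [← Finset.sum_mul, count_piecewise]
  rw [← Finset.mul_sum, Matrix.trace]
  simp [Matrix.diag]

def pe {n : ℕ} (t : Finset (Fin n)) :
    (Fin n → Fin 2) ≃ ({ i // i ∈ t } → Fin 2) × ({ i // ¬ i ∈ t } → Fin 2) :=
  Equiv.piEquivPiSubtypeProd (fun i => i ∈ t) (fun _ => Fin 2)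

lemma piecewise_pe {n : ℕ} (t : Finset (Fin n)) (w w' : { i // i ∈ t } → Fin 2)
    (x y : { i // ¬ i ∈ t } → Fin 2) :
    t.piecewise ((pe t).symm (w, y)) ((pe t).symm (w', x)) = (pe t).symm (w, x) := by
  funext i
  by_cases h : i ∈ t <;>
    simp [pe, Equiv.piEquivPiSubtypeProd, Finset.piecewise, h]

lemma term_eq {n : ℕ} (t : Finset (Fin n)) (A B : Matrix (Fin n → Fin 2) (Fin n → Fin 2) ℂ) :
    (∑ a, ∑ b, A (t.piecewise a b) a * B (t.piecewise b a) b)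
    = ∑ x : { i // ¬ i ∈ t } → Fin 2, ∑ y : { i // ¬ i ∈ t } → Fin 2,
        (∑ w : { i // i ∈ t } → Fin 2, A ((pe t).symm (w, x)) ((pe t).symm (w, y))) *
        (∑ w : { i // i ∈ t } → Fin 2, B ((pe t).symm (w, y)) ((pe t).symm (w, x))) := by
  rw [← Equiv.sum_comp (pe t).symm
    (fun a => ∑ b, A (t.piecewise a b) a * B (t.piecewise b a) b)]
  rw [Fintype.sum_prod_type]
  have h1 : ∀ (w : { i // i ∈ t } → Fin 2) (y : { i // ¬ i ∈ t } → Fin 2),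
      (∑ b, A (t.piecewise ((pe t).symm (w, y)) b) ((pe t).symm (w, y)) *
        B (t.piecewise b ((pe t).symm (w, y))) b)
      = ∑ w' : { i // i ∈ t } → Fin 2, ∑ x : { i // ¬ i ∈ t } → Fin 2,
          A ((pe t).symm (w, x)) ((pe t).symm (w, y)) *
          B ((pe t).symm (w', y)) ((pe t).symm (w', x)) := by
    intro w y
    rw [← Equiv.sum_comp (pe t).symm, Fintype.sum_prod_type]
    exact Finset.sum_congr rfl fun w' _ => Finset.sum_congr rfl fun x _ => by
      rw [piecewise_pe, piecewise_pe]
  simp_rw [h1]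
  simp_rw [Finset.sum_mul_sum]
  rw [Finset.sum_congr rfl fun w (_ : w ∈ Finset.univ) =>
    Finset.sum_congr rfl fun y (_ : y ∈ Finset.univ) => Finset.sum_comm]
  rw [Finset.sum_congr rfl fun w (_ : w ∈ Finset.univ) => Finset.sum_comm]
  rw [Finset.sum_comm]
  rw [Finset.sum_congr rfl fun x (_ : x ∈ Finset.univ) => Finset.sum_comm]

lemma sum_sq_partial_le {n : ℕ} (t : Finset (Fin n))
    (M : Matrix (Fin n → Fin 2) (Fin n → Fin 2) ℂ) :
    (∑ x : { i // ¬ i ∈ t } → Fin 2, ∑ y : { i // ¬ i ∈ t } → Fin 2,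
      ‖∑ w : { i // i ∈ t } → Fin 2, M ((pe t).symm (w, x)) ((pe t).symm (w, y))‖ ^ 2)
    ≤ 2 ^ t.card * ∑ p, ∑ q, ‖M p q‖ ^ 2 := by
  have hcard : (Fintype.card ({ i // i ∈ t } → Fin 2) : ℝ) = 2 ^ t.card := by
    rw [Fintype.card_fun, Fintype.card_coe, Fintype.card_fin]
    push_cast; ring
  have step1 : ∀ x y : { i // ¬ i ∈ t } → Fin 2,
      ‖∑ w : { i // i ∈ t } → Fin 2, M ((pe t).symm (w, x)) ((pe t).symm (w, y))‖ ^ 2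
      ≤ 2 ^ t.card * ∑ w : { i // i ∈ t } → Fin 2,
          ‖M ((pe t).symm (w, x)) ((pe t).symm (w, y))‖ ^ 2 := by
    intro x y
    calc ‖∑ w : { i // i ∈ t } → Fin 2, M ((pe t).symm (w, x)) ((pe t).symm (w, y))‖ ^ 2
        ≤ (∑ w : { i // i ∈ t } → Fin 2, ‖M ((pe t).symm (w, x)) ((pe t).symm (w, y))‖) ^ 2 := by
          apply pow_le_pow_left₀ (norm_nonneg _) (norm_sum_le _ _)
      _ ≤ (Finset.univ.card : ℝ) * ∑ w : { i // i ∈ t } → Fin 2,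
            ‖M ((pe t).symm (w, x)) ((pe t).symm (w, y))‖ ^ 2 := sq_sum_le_card_mul_sum_sq
      _ = 2 ^ t.card * _ := by rw [Finset.card_univ, hcard]
  calc (∑ x : { i // ¬ i ∈ t } → Fin 2, ∑ y : { i // ¬ i ∈ t } → Fin 2,
      ‖∑ w : { i // i ∈ t } → Fin 2, M ((pe t).symm (w, x)) ((pe t).symm (w, y))‖ ^ 2)
      ≤ ∑ x : { i // ¬ i ∈ t } → Fin 2, ∑ y : { i // ¬ i ∈ t } → Fin 2,
          2 ^ t.card * ∑ w : { i // i ∈ t } → Fin 2,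
            ‖M ((pe t).symm (w, x)) ((pe t).symm (w, y))‖ ^ 2 := by
        exact Finset.sum_le_sum fun x _ => Finset.sum_le_sum fun y _ => step1 x y
    _ = 2 ^ t.card * ∑ x : { i // ¬ i ∈ t } → Fin 2, ∑ y : { i // ¬ i ∈ t } → Fin 2,
          ∑ w : { i // i ∈ t } → Fin 2,
            ‖M ((pe t).symm (w, x)) ((pe t).symm (w, y))‖ ^ 2 := by
        simp_rw [← Finset.mul_sum]
    _ ≤ 2 ^ t.card * ∑ p, ∑ q, ‖M p q‖ ^ 2 := by
        apply mul_le_mul_of_nonneg_left _ (by positivity)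
        have expand : (∑ p, ∑ q, ‖M p q‖ ^ 2)
            = ∑ w : { i // i ∈ t } → Fin 2, ∑ x : { i // ¬ i ∈ t } → Fin 2,
              ∑ w' : { i // i ∈ t } → Fin 2, ∑ y : { i // ¬ i ∈ t } → Fin 2,
                ‖M ((pe t).symm (w, x)) ((pe t).symm (w', y))‖ ^ 2 := by
          rw [← Equiv.sum_comp (pe t).symm (fun p => ∑ q, ‖M p q‖ ^ 2), Fintype.sum_prod_type]
          refine Finset.sum_congr rfl fun w _ => Finset.sum_congr rfl fun x _ => ?_
          rw [← Equiv.sum_comp (pe t).symm (fun q => ‖M ((pe t).symm (w, x)) q‖ ^ 2),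
            Fintype.sum_prod_type]
        rw [expand]
        have lhs_reorder :
            (∑ x : { i // ¬ i ∈ t } → Fin 2, ∑ y : { i // ¬ i ∈ t } → Fin 2,
              ∑ w : { i // i ∈ t } → Fin 2,
                ‖M ((pe t).symm (w, x)) ((pe t).symm (w, y))‖ ^ 2)
            = ∑ w : { i // i ∈ t } → Fin 2, ∑ x : { i // ¬ i ∈ t } → Fin 2,
                ∑ y : { i // ¬ i ∈ t } → Fin 2,
                  ‖M ((pe t).symm (w, x)) ((pe t).symm (w, y))‖ ^ 2 := by
          rw [Finset.sum_congr rfl fun x (_ : x ∈ Finset.univ) => Finset.sum_comm]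
          rw [Finset.sum_comm]
        rw [lhs_reorder]
        rw [Finset.sum_congr rfl fun w (_ : w ∈ Finset.univ) =>
          Finset.sum_congr rfl fun x (_ : x ∈ Finset.univ) => Finset.sum_comm]
        refine Finset.sum_le_sum fun w _ => Finset.sum_le_sum fun x _ =>
          Finset.sum_le_sum fun y _ => ?_
        exact Finset.single_le_sum
          (f := fun w' : { i // i ∈ t } → Fin 2 =>
            ‖M ((pe t).symm (w, x)) ((pe t).symm (w', y))‖ ^ 2)
          (fun w' _ => by positivity) (Finset.mem_univ w)

lemma term_bound {n : ℕ} (t : Finset (Fin n))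
    (A B : Matrix (Fin n → Fin 2) (Fin n → Fin 2) ℂ)
    (hA : A.IsHermitian) (hB : B.IsHermitian) :
    ∃ r : ℝ, (∑ a, ∑ b, A (t.piecewise a b) a * B (t.piecewise b a) b) = (r : ℂ) ∧
      |r| ≤ 2 ^ t.card *
        Real.sqrt ((∑ p, ∑ q, ‖A p q‖ ^ 2) * (∑ p, ∑ q, ‖B p q‖ ^ 2)) := by
  classical
  set U : ({ i // ¬ i ∈ t } → Fin 2) → ({ i // ¬ i ∈ t } → Fin 2) → ℂ :=
    fun x y => ∑ w : { i // i ∈ t } → Fin 2, A ((pe t).symm (w, x)) ((pe t).symm (w, y))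
    with hUdef
  set V : ({ i // ¬ i ∈ t } → Fin 2) → ({ i // ¬ i ∈ t } → Fin 2) → ℂ :=
    fun x y => ∑ w : { i // i ∈ t } → Fin 2, B ((pe t).symm (w, x)) ((pe t).symm (w, y))
    with hVdef
  have hermU : ∀ x y, (starRingEnd ℂ) (U x y) = U y x := by
    intro x y
    rw [hUdef, map_sum]
    refine Finset.sum_congr rfl fun w _ => ?_
    exact hA.apply _ _
  have hermV : ∀ x y, (starRingEnd ℂ) (V x y) = V y x := by
    intro x y
    rw [hVdef, map_sum]
    refine Finset.sum_congr rfl fun w _ => ?_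
    exact hB.apply _ _
  have hS : (∑ a, ∑ b, A (t.piecewise a b) a * B (t.piecewise b a) b)
      = ∑ x, ∑ y, U x y * V y x := term_eq t A B
  set S : ℂ := ∑ x, ∑ y, U x y * V y x with hSdef
  have hconjS : (starRingEnd ℂ) S = S := by
    rw [hSdef, map_sum]
    rw [Finset.sum_comm]
    refine Finset.sum_congr rfl fun y _ => ?_
    rw [map_sum]
    refine Finset.sum_congr rfl fun x _ => ?_
    rw [_root_.map_mul, hermU, hermV]
  refine ⟨S.re, ?_, ?_⟩
  · rw [hS]
    exact (Complex.conj_eq_iff_re.mp hconjS).symm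
  · have habs : |S.re| ≤ ‖S‖ := Complex.abs_re_le_norm S
    refine habs.trans ?_
    have h1 : ‖S‖ ≤ ∑ x, ∑ y, ‖U x y‖ * ‖V x y‖ := by
      rw [hSdef]
      refine (norm_sum_le _ _).trans ?_
      refine Finset.sum_le_sum fun x _ => ?_
      refine (norm_sum_le _ _).trans ?_
      refine Finset.sum_le_sum fun y _ => ?_
      rw [norm_mul]
      have : ‖V y x‖ = ‖V x y‖ := by
        rw [← hermV x y, RCLike.norm_conj]
      rw [this]
    refine h1.trans ?_
    have h2 : (∑ x, ∑ y, ‖U x y‖ * ‖V x y‖)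
        ≤ Real.sqrt (∑ x, ∑ y, ‖U x y‖ ^ 2) * Real.sqrt (∑ x, ∑ y, ‖V x y‖ ^ 2) := by
      have key := Real.sum_mul_le_sqrt_mul_sqrt
        (Finset.univ : Finset ((({ i // ¬ i ∈ t } → Fin 2)) × (({ i // ¬ i ∈ t } → Fin 2))))
        (fun p => ‖U p.1 p.2‖) (fun p => ‖V p.1 p.2‖)
      simpa [Fintype.sum_prod_type] using key
    refine h2.trans ?_
    have hUb : (∑ x, ∑ y, ‖U x y‖ ^ 2) ≤ 2 ^ t.card * ∑ p, ∑ q, ‖A p q‖ ^ 2 :=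
      sum_sq_partial_le t A
    have hVb : (∑ x, ∑ y, ‖V x y‖ ^ 2) ≤ 2 ^ t.card * ∑ p, ∑ q, ‖B p q‖ ^ 2 :=
      sum_sq_partial_le t B
    have hα : (0:ℝ) ≤ ∑ p, ∑ q, ‖A p q‖ ^ 2 :=
      Finset.sum_nonneg fun _ _ => Finset.sum_nonneg fun _ _ => sq_nonneg _
    have hβ : (0:ℝ) ≤ ∑ p, ∑ q, ‖B p q‖ ^ 2 :=
      Finset.sum_nonneg fun _ _ => Finset.sum_nonneg fun _ _ => sq_nonneg _
    have h2pow : (0:ℝ) ≤ 2 ^ t.card := by positivity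
    calc Real.sqrt (∑ x, ∑ y, ‖U x y‖ ^ 2) * Real.sqrt (∑ x, ∑ y, ‖V x y‖ ^ 2)
        ≤ Real.sqrt (2 ^ t.card * ∑ p, ∑ q, ‖A p q‖ ^ 2) *
          Real.sqrt (2 ^ t.card * ∑ p, ∑ q, ‖B p q‖ ^ 2) := by
          exact mul_le_mul (Real.sqrt_le_sqrt hUb) (Real.sqrt_le_sqrt hVb)
            (Real.sqrt_nonneg _) (Real.sqrt_nonneg _)
      _ = 2 ^ t.card * Real.sqrt ((∑ p, ∑ q, ‖A p q‖ ^ 2) * (∑ p, ∑ q, ‖B p q‖ ^ 2)) := by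
          rw [← Real.sqrt_mul (mul_nonneg h2pow hα)]
          rw [show (2:ℝ) ^ t.card * (∑ p, ∑ q, ‖A p q‖ ^ 2) *
              (2 ^ t.card * ∑ p, ∑ q, ‖B p q‖ ^ 2)
              = (2 ^ t.card) ^ 2 * ((∑ p, ∑ q, ‖A p q‖ ^ 2) * ∑ p, ∑ q, ‖B p q‖ ^ 2) by ring]
          rw [Real.sqrt_mul (pow_nonneg h2pow 2), Real.sqrt_sq h2pow]

lemma sum_two_pow {R : Type*} [CommSemiring R] (n : ℕ) :
    ∑ t : Finset (Fin n), (2:R) ^ t.card = 3 ^ n := by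
  symm
  calc (3:R) ^ n = ∏ _i : Fin n, (2 + 1 : R) := by norm_num
    _ = ∑ t ∈ (Finset.univ : Finset (Fin n)).powerset,
          (∏ _i ∈ t, (2:R)) * ∏ _i ∈ Finset.univ \ t, (1:R) := Finset.prod_add _ _ _
    _ = ∑ t : Finset (Fin n), (2:R) ^ t.card := by
        rw [Finset.powerset_univ]
        exact Finset.sum_congr rfl fun t _ => by simp [Finset.prod_const]

lemma trace_sq {n : ℕ} {A : Matrix (Fin n → Fin 2) (Fin n → Fin 2) ℂ} (hA : A.IsHermitian) :
    Matrix.trace (A ^ 2) = ((∑ p, ∑ q, ‖A p q‖ ^ 2 : ℝ) : ℂ) := by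
  rw [pow_two, Matrix.trace]
  push_cast
  simp only [Matrix.diag_apply, Matrix.mul_apply]
  refine Finset.sum_congr rfl fun p _ => Finset.sum_congr rfl fun q _ => ?_
  rw [← hA.apply q p]
  simp [Complex.mul_conj, Complex.normSq_eq_norm_sq]

/-- **Cauchy–Schwarz-type bound for the `P`-pairing.**
For Hermitian `A, B`, the number `tr(P (A ⊗ B))` is real and satisfies
`(tr(P (A ⊗ B)))² ≤ 9ⁿ tr(A²) tr(B²)`; moreover `tr(P (A² ⊗ I)) = 3ⁿ tr(A²)` and
`tr(P (I ⊗ B²)) = 3ⁿ tr(B²)`. (Inequalities of complex numbers are taken with respect to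
the partial order of `ℂ`.) -/
theorem swapSum_pairing_bound (n : ℕ) (hn : 1 ≤ n)
    (A B : Matrix (Fin n → Fin 2) (Fin n → Fin 2) ℂ)
    (hA : A.IsHermitian) (hB : B.IsHermitian) :
    (Matrix.trace (swapSum n * (A ⊗ₖ B))).im = 0 ∧
      (Matrix.trace (swapSum n * (A ⊗ₖ B))) ^ 2
        ≤ (9 : ℂ) ^ n * Matrix.trace (A ^ 2) * Matrix.trace (B ^ 2) ∧
      Matrix.trace (swapSum n * ((A ^ 2) ⊗ₖ (1 : Matrix (Fin n → Fin 2) (Fin n → Fin 2) ℂ)))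
        = (3 : ℂ) ^ n * Matrix.trace (A ^ 2) ∧
      Matrix.trace (swapSum n * ((1 : Matrix (Fin n → Fin 2) (Fin n → Fin 2) ℂ) ⊗ₖ (B ^ 2)))
        = (3 : ℂ) ^ n * Matrix.trace (B ^ 2) := by
  classical
  have hterm := fun t : Finset (Fin n) => term_bound t A B hA hB
  choose r hr hrb using hterm
  have hα : (0:ℝ) ≤ ∑ p, ∑ q, ‖A p q‖ ^ 2 :=
    Finset.sum_nonneg fun _ _ => Finset.sum_nonneg fun _ _ => sq_nonneg _
  have hβ : (0:ℝ) ≤ ∑ p, ∑ q, ‖B p q‖ ^ 2 :=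
    Finset.sum_nonneg fun _ _ => Finset.sum_nonneg fun _ _ => sq_nonneg _
  have htr : Matrix.trace (swapSum n * (A ⊗ₖ B))
      = ((∑ t : Finset (Fin n), r t : ℝ) : ℂ) := by
    rw [trace_expand_s15]
    rw [Finset.sum_congr rfl fun t (_ : t ∈ Finset.univ) => hr t]
    push_cast
    rfl
  refine ⟨?_, ?_, ?_, ?_⟩
  · rw [htr]
    simp
  · rw [htr, trace_sq hA, trace_sq hB]
    have hs : (∑ t : Finset (Fin n), r t) ^ 2
        ≤ 9 ^ n * ((∑ p, ∑ q, ‖A p q‖ ^ 2) * (∑ p, ∑ q, ‖B p q‖ ^ 2)) := by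
      have h1 : |∑ t : Finset (Fin n), r t|
          ≤ 3 ^ n * Real.sqrt ((∑ p, ∑ q, ‖A p q‖ ^ 2) * (∑ p, ∑ q, ‖B p q‖ ^ 2)) := by
        refine (Finset.abs_sum_le_sum_abs _ _).trans ?_
        refine (Finset.sum_le_sum fun t (_ : t ∈ Finset.univ) => hrb t).trans ?_
        rw [← Finset.sum_mul, sum_two_pow]
      have h2 : (∑ t : Finset (Fin n), r t) ^ 2
          ≤ (3 ^ n * Real.sqrt ((∑ p, ∑ q, ‖A p q‖ ^ 2) * (∑ p, ∑ q, ‖B p q‖ ^ 2))) ^ 2 := by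
        rw [← sq_abs]
        exact pow_le_pow_left₀ (abs_nonneg _) h1 2
      refine h2.trans_eq ?_
      rw [mul_pow, Real.sq_sqrt (mul_nonneg hα hβ), ← pow_mul, mul_comm n 2, pow_mul]
      norm_num
    calc ((∑ t : Finset (Fin n), r t : ℝ) : ℂ) ^ 2
        = (((∑ t : Finset (Fin n), r t) ^ 2 : ℝ) : ℂ) := by push_cast; ring
      _ ≤ ((9 ^ n * ((∑ p, ∑ q, ‖A p q‖ ^ 2) * (∑ p, ∑ q, ‖B p q‖ ^ 2)) : ℝ) : ℂ) := by
          rw [Complex.real_le_real]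
          exact hs
      _ = (9:ℂ) ^ n * ((∑ p, ∑ q, ‖A p q‖ ^ 2 : ℝ) : ℂ) * ((∑ p, ∑ q, ‖B p q‖ ^ 2 : ℝ) : ℂ) := by
          push_cast
          ring
  · rw [trace_expand_s15]
    rw [Finset.sum_congr rfl fun t (_ : t ∈ Finset.univ) => term_one_right t (A ^ 2)]
    rw [← Finset.sum_mul, sum_two_pow]
  · rw [trace_expand_s15]
    rw [Finset.sum_congr rfl fun t (_ : t ∈ Finset.univ) => term_one_left t (B ^ 2)]
    rw [← Finset.sum_mul, sum_two_pow]
end
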